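/- Let σ ∈ C²_b(ℝ) and φ the flow of y' = σ(y). Then for all x₁, x₂ ∈ ℝ: σ²(x₁)·∂²φ/∂x₁²(x₁,−x₂) − 2σ(x₁)·∂²φ/∂x₁∂x₂(x₁,−x₂) + σ(x₁)σ'(x₁)·∂φ/∂x₁(x₁,−x₂) + ∂²φ/∂x₂²(x₁,−x₂) = 0. -/

import Mathlib

open Filter Topology Set

/-- Global uniqueness of solutions of `y' = σ(y)` for Lipschitz `σ`. -/
lemma stmt13_ode_unique {K : NNReal} {σ : ℝ → ℝ} (hL : LipschitzWith K σ)
    {f g : ℝ → ℝ} (hf : ∀ t, HasDerivAt f (σ (f t)) t)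
    (hg : ∀ t, HasDerivAt g (σ (g t)) t) {t₀ : ℝ} (heq : f t₀ = g t₀) (t : ℝ) :
    f t = g t := by
  have h1 : (0:ℝ) < |t - t₀| + 1 := by positivity
  have habs := abs_lt.mp (show |t - t₀| < |t - t₀| + 1 by linarith)
  have ht : t ∈ Set.Ioo (t₀ - (|t - t₀| + 1)) (t₀ + (|t - t₀| + 1)) :=
    ⟨by linarith [habs.1], by linarith [habs.2]⟩
  have ht₀ : t₀ ∈ Set.Ioo (t₀ - (|t - t₀| + 1)) (t₀ + (|t - t₀| + 1)) := by
    constructor <;> nlinarith [abs_nonneg (t - t₀)]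
  exact ODE_solution_unique_of_mem_Ioo (v := fun _ x => σ x) (s := fun _ => Set.univ)
    (fun _ _ => hL.lipschitzOnWith) ht₀
    (fun u _ => ⟨hf u, trivial⟩) (fun u _ => ⟨hg u, trivial⟩) heq ht

theorem stmt_13 (σ : ℝ → ℝ) (hσ : ContDiff ℝ 2 σ)
    (hσb : ∃ C : ℝ, ∀ x, |σ x| ≤ C ∧ |deriv σ x| ≤ C ∧ |deriv (deriv σ) x| ≤ C)
    (φ : ℝ → ℝ → ℝ)
    (hφ0 : ∀ x₁ : ℝ, φ x₁ 0 = x₁)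
    (hφ : ∀ x₁ x₂ : ℝ, HasDerivAt (φ x₁) (σ (φ x₁ x₂)) x₂) :
    ∀ x₁ x₂ : ℝ,
      σ x₁ ^ 2 * deriv (fun x => deriv (fun x' => φ x' (-x₂)) x) x₁
        - 2 * σ x₁ * deriv (fun y => deriv (fun x => φ x y) x₁) (-x₂)
        + σ x₁ * deriv σ x₁ * deriv (fun x => φ x (-x₂)) x₁
        + deriv (deriv (φ x₁)) (-x₂) = 0 := by
  obtain ⟨C, hC⟩ := hσb
  have hσd : Differentiable ℝ σ := hσ.differentiable two_ne_zero
  have hC0 : (0:ℝ) ≤ C := le_trans (abs_nonneg _) (hC 0).1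
  have hL : LipschitzWith ⟨C, hC0⟩ σ := by
    apply lipschitzWith_of_nnnorm_deriv_le hσd
    intro x
    change (‖deriv σ x‖₊ : ℝ) ≤ C
    simpa [Real.norm_eq_abs] using (hC x).2.1
  have uniq : ∀ (f g : ℝ → ℝ), (∀ t, HasDerivAt f (σ (f t)) t) →
      (∀ t, HasDerivAt g (σ (g t)) t) → ∀ t₀, f t₀ = g t₀ → ∀ t, f t = g t :=
    fun f g hf hg t₀ heq t => stmt13_ode_unique hL hf hg heq t
  -- group property
  have hgrp : ∀ x s t, φ (φ x s) t = φ x (s + t) := by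
    intro x s t
    refine uniq (φ (φ x s)) (fun t => φ x (s + t)) (hφ _) (fun t => ?_) 0 (by simp [hφ0]) t
    simpa [Function.comp_def] using ((hφ x (s + t)).comp t ((hasDerivAt_id t).const_add s))
  intro x₁ x₂
  have hderivφ : deriv (φ x₁) = fun t => σ (φ x₁ t) := funext fun t => (hφ x₁ t).deriv
  rcases eq_or_ne (σ x₁) 0 with h0 | h0
  · -- stationary case
    have hconst : ∀ t, φ x₁ t = x₁ := by
      refine uniq (φ x₁) (fun _ => x₁) (hφ x₁) (fun t => ?_) 0 (by simp [hφ0])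
      exact h0 ▸ hasDerivAt_const t x₁
    have hz : deriv (φ x₁) = fun _ => (0:ℝ) := by
      rw [hderivφ]; funext t; rw [hconst t, h0]
    rw [h0, hz]
    simp
  · -- non-stationary case
    have h00 : φ x₁ 0 = x₁ := hφ0 x₁
    -- σ never vanishes along the trajectory
    have hnz : ∀ s, σ (φ x₁ s) ≠ 0 := by
      intro s hzero
      apply h0
      have hcst : ∀ t, φ x₁ t = φ x₁ s := by
        refine uniq (φ x₁) (fun _ => φ x₁ s) (hφ x₁) (fun t => ?_) s rfl
        exact hzero ▸ hasDerivAt_const t (φ x₁ s)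
      rw [← h00, hcst 0, hzero]
    have hψdiff : Differentiable ℝ (φ x₁) := fun t => (hφ x₁ t).differentiableAt
    have hψC1 : ContDiff ℝ 1 (φ x₁) := by
      rw [contDiff_one_iff_deriv, hderivφ]
      exact ⟨hψdiff, hσ.continuous.comp hψdiff.continuous⟩
    have hstrict : ∀ s, HasStrictDerivAt (φ x₁) (σ (φ x₁ s)) s := fun s =>
      hψC1.contDiffAt.hasStrictDerivAt' (hφ x₁ s) one_ne_zero
    -- key derivative in the first variable
    have key : ∀ s y, HasDerivAt (fun x => φ x y)
        (σ (φ (φ x₁ s) y) / σ (φ x₁ s)) (φ x₁ s) := by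
      intro s y
      have hs := hstrict s
      have hne := hnz s
      have hF := hs.hasStrictFDerivAt_equiv hne
      set g : ℝ → ℝ := HasStrictDerivAt.localInverse (φ x₁) (σ (φ x₁ s)) s hs hne with hgdef
      have hright : ∀ᶠ x in 𝓝 (φ x₁ s), φ x₁ (g x) = x := hF.eventually_right_inverse
      have hgs : g (φ x₁ s) = s := hF.localInverse_apply_image
      have hgd : HasDerivAt g (σ (φ x₁ s))⁻¹ (φ x₁ s) :=
        (HasStrictDerivAt.to_localInverse hs hne).hasDerivAt
      have hrep : (fun x => φ x y) =ᶠ[𝓝 (φ x₁ s)] fun x => φ x₁ (g x + y) := by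
        filter_upwards [hright] with x hx
        conv_lhs => rw [← hx]
        rw [hgrp]
      have hcomp : HasDerivAt (fun x => φ x₁ (g x + y))
          (σ (φ (φ x₁ s) y) / σ (φ x₁ s)) (φ x₁ s) := by
        have hinner : HasDerivAt (fun x => g x + y) (σ (φ x₁ s))⁻¹ (φ x₁ s) :=
          hgd.add_const y
        have houter : HasDerivAt (φ x₁) (σ (φ x₁ (s + y))) (g (φ x₁ s) + y) := by
          rw [hgs]; exact hφ x₁ (s + y)
        have := houter.comp (φ x₁ s) hinner
        simpa [hgrp, div_eq_mul_inv, Function.comp_def] using this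
      exact hcomp.congr_of_eventuallyEq hrep
    have keyx₁ : ∀ y, HasDerivAt (fun x => φ x y) (σ (φ x₁ y) / σ x₁) x₁ := by
      intro y
      have := key 0 y
      rwa [h00] at this
    set p := φ x₁ (-x₂) with hp
    have hσp := hnz (-x₂)
    -- A
    have hA : deriv (fun x => φ x (-x₂)) x₁ = σ p / σ x₁ := (keyx₁ (-x₂)).deriv
    -- E
    have hEd : HasDerivAt (deriv (φ x₁)) (deriv σ p * σ p) (-x₂) := by
      rw [hderivφ]
      exact (hσd p).hasDerivAt.comp (-x₂) (hφ x₁ (-x₂))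
    -- C
    have hCfun : (fun y => deriv (fun x => φ x y) x₁) = fun y => σ (φ x₁ y) / σ x₁ :=
      funext fun y => (keyx₁ y).deriv
    have hCd : HasDerivAt (fun y => σ (φ x₁ y) / σ x₁) (deriv σ p * σ p / σ x₁) (-x₂) :=
      ((hσd p).hasDerivAt.comp (-x₂) (hφ x₁ (-x₂))).div_const (σ x₁)
    -- B
    have hBrep : ∀ᶠ x in 𝓝 x₁, deriv (fun x' => φ x' (-x₂)) x = σ (φ x (-x₂)) / σ x := by
      have hs := hstrict 0
      have hne : σ (φ x₁ 0) ≠ 0 := hnz 0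
      have hF := hs.hasStrictFDerivAt_equiv hne
      have hright := hF.eventually_right_inverse
      have hnn : 𝓝 (φ x₁ 0) = 𝓝 x₁ := by rw [h00]
      rw [hnn] at hright
      have hmem : ∀ᶠ x in 𝓝 x₁, ∃ s, φ x₁ s = x := hright.mono fun x hx => ⟨_, hx⟩
      filter_upwards [hmem] with x hx
      obtain ⟨s', hs'⟩ := hx
      have := key s' (-x₂)
      rw [hs'] at this
      exact this.deriv
    have hBd : HasDerivAt (fun x => σ (φ x (-x₂)) / σ x)
        ((deriv σ p * (σ p / σ x₁) * σ x₁ - σ p * deriv σ x₁) / σ x₁ ^ 2) x₁ := by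
      exact HasDerivAt.div ((hσd p).hasDerivAt.comp x₁ (keyx₁ (-x₂))) (hσd x₁).hasDerivAt h0
    have hB : deriv (fun x => deriv (fun x' => φ x' (-x₂)) x) x₁
        = (deriv σ p * (σ p / σ x₁) * σ x₁ - σ p * deriv σ x₁) / σ x₁ ^ 2 := by
      rw [Filter.EventuallyEq.deriv_eq hBrep]
      exact hBd.deriv
    rw [hB, hCfun, hCd.deriv, hA, hEd.deriv]
    field_simp
    ring
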